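/- Let (â_{n,·})_{n∈ℕ} be random elements of C[0,1] on a probability space, let a_{n,t} > 0 (for n ∈ ℕ, t ∈ [0,1]) be deterministic positive scaling constants, let A be a random element of C[0,1], and let (λ_n) be a positive bounded sequence. Assume (i) sup_{t∈[0,1]} |λ_n^{−1}(â_{n,t}/a_{n,t} − 1) − A_t| →(P) 0 as n → ∞, and (ii) sup_{|s−t|≤δ_n} |a_{n,s}/a_{n,t} − 1| = o(λ_n). Then the linearly interpolated estimator â*_{n,t} := ⟨â_{n,·}⟩_{n,t} satisfies sup_{t∈[0,1]} |λ_n^{−1}(â*_{n,t}/a_{n,t} − 1) − A_t| →(P) 0. -/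

import Mathlib

open MeasureTheory Filter Topology Set
open scoped Classical

/-- Piecewise linear interpolation of `z` on the grid `t 1 < t 2 < … < t jn`. -/
noncomputable def linInterp (jn : ℕ) (t : ℕ → ℝ) (z : ℝ → ℝ) (x : ℝ) : ℝ :=
  if x ≤ t 1 then z (t 1)
  else if h : ∃ j, 2 ≤ j ∧ j ≤ jn ∧ t (j - 1) < x ∧ x ≤ t j then
    ((t (Nat.find h) - x) * z (t (Nat.find h - 1))
        + (x - t (Nat.find h - 1)) * z (t (Nat.find h)))
      / (t (Nat.find h) - t (Nat.find h - 1))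
  else z (t jn)


lemma grid_mono (jn : ℕ) (t : ℕ → ℝ) (htmono : ∀ j, 1 ≤ j → j < jn → t j < t (j+1)) :
    ∀ j k, 1 ≤ j → j ≤ k → k ≤ jn → t j ≤ t k := by
  intro j k hj hjk hk
  induction k with
  | zero => omega
  | succ k ih =>
    rcases Nat.eq_or_lt_of_le hjk with h | h
    · rw [h]
    · have hjk' : j ≤ k := by omega
      have h1 : t j ≤ t k := ih hjk' (by omega)
      exact h1.trans (le_of_lt (htmono k (by omega) (by omega)))

lemma chain_lower {a : ℝ → ℝ} {c d : ℝ}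
    (hpos : ∀ s ∈ Icc (0:ℝ) 1, 0 < a s) (hc : 0 ≤ c) (hd : 0 < d)
    (h : ∀ s ∈ Icc (0:ℝ) 1, ∀ u ∈ Icc (0:ℝ) 1, |s - u| ≤ d → |a s / a u - 1| ≤ c) :
    ∃ α > 0, ∀ s ∈ Icc (0:ℝ) 1, α ≤ a s := by
  have key : ∀ k : ℕ, ∀ s ∈ Icc (0:ℝ) 1, s ≤ k * d → a 0 / (1+c)^k ≤ a s := by
    intro k
    induction k with
    | zero =>
      intro s hs hsk
      have : s = 0 := le_antisymm (by simpa using hsk) hs.1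
      simp [this]
    | succ k ih =>
      intro s hs hsk
      by_cases hcase : s ≤ k * d
      · refine le_trans ?_ (ih s hs hcase)
        apply div_le_div_of_nonneg_left (le_of_lt (hpos 0 (by norm_num)))
        · positivity
        · exact pow_le_pow_right₀ (by linarith) (by omega)
      · set s' := max (s - d) 0 with hs'
        have hs'mem : s' ∈ Icc (0:ℝ) 1 := by
          constructor
          · exact le_max_right _ _
          · exact max_le (by linarith [hs.2]) (by norm_num)
        have hdist : |s' - s| ≤ d := by
          rw [abs_le]; constructor
          · have : s - d ≤ s' := le_max_left _ _
            linarith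
          · have h0 : 0 ≤ s := hs.1
            have : s' ≤ s := max_le (by linarith) h0
            linarith
        have hs'k : s' ≤ k * d := by
          push_neg at hcase
          apply max_le
          · push_cast [Nat.cast_succ] at hsk; linarith
          · positivity
        have hratio : a s' / a s ≤ 1 + c := by
          have := h s' hs'mem s hs hdist
          have := abs_le.mp this
          linarith [this.2]
        have has : 0 < a s := hpos s hs
        have has' : 0 < a s' := hpos s' hs'mem
        have hstep : a s' / (1+c) ≤ a s := by
          rw [div_le_iff₀ (by linarith)]
          calc a s' = (a s' / a s) * a s := by field_simp
          _ ≤ (1+c) * a s := by nlinarith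
          _ = a s * (1+c) := by ring
        calc a 0 / (1+c)^(k+1) = (a 0 / (1+c)^k) / (1+c) := by
              rw [div_div, pow_succ]
        _ ≤ a s' / (1+c) := by
              apply div_le_div_of_nonneg_right ?_ (by linarith)
              exact ih s' hs'mem hs'k
        _ ≤ a s := hstep
  obtain ⟨K, hK⟩ := exists_nat_ge (1/d)
  have ha0 : 0 < a 0 := hpos 0 (by norm_num)
  refine ⟨a 0 / (1+c)^K, by positivity, fun s hs => key K s hs ?_⟩
  have h1 : 1 ≤ (K:ℝ) * d := by
    have := (div_le_iff₀ hd).mp hK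
    linarith
  linarith [hs.2]

lemma rat_near {s : ℝ} (hs : s ∈ Icc (0:ℝ) 1) {η : ℝ} (hη : 0 < η) :
    ∃ q : ℚ, (q:ℝ) ∈ Icc (0:ℝ) 1 ∧ |(q:ℝ) - s| < η := by
  rcases lt_or_eq_of_le hs.2 with h1 | h1
  · obtain ⟨q, hq1, hq2⟩ := exists_rat_btwn (show s < min (s+η) 1 by
      apply lt_min (by linarith) h1)
    refine ⟨q, ⟨le_trans hs.1 hq1.le, le_trans hq2.le (min_le_right _ _)⟩, ?_⟩
    rw [abs_lt]
    constructor <;> [linarith; linarith [lt_of_lt_of_le hq2 (min_le_left _ _)]]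
  · obtain ⟨q, hq1, hq2⟩ := exists_rat_btwn (show max (1-η) 0 < (1:ℝ) by
      apply max_lt (by linarith) one_pos)
    refine ⟨q, ⟨le_trans (le_max_right _ _) hq1.le, hq2.le⟩, ?_⟩
    subst h1
    rw [abs_lt]
    constructor <;> [linarith [lt_of_le_of_lt (le_max_left (1-η) 0) hq1]; linarith]

lemma cont_bound_of_rat {f : ℝ → ℝ} (hf : ContinuousOn f (Icc 0 1)) {B : ℝ}
    (h : ∀ q : ℚ, (q:ℝ) ∈ Icc (0:ℝ) 1 → |f q| ≤ B) :
    ∀ s ∈ Icc (0:ℝ) 1, |f s| ≤ B := by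
  intro s hs
  refine le_of_forall_pos_le_add fun c hc => ?_
  have hcont := (hf s hs)
  rw [Metric.continuousWithinAt_iff] at hcont
  obtain ⟨η, hη, hball⟩ := hcont c hc
  obtain ⟨q, hqI, hqs⟩ := rat_near hs hη
  have := hball hqI (by rwa [Real.dist_eq])
  rw [Real.dist_eq] at this
  calc |f s| = |f q + (f s - f q)| := by ring_nf
  _ ≤ |f q| + |f s - f q| := abs_add_le _ _
  _ ≤ B + c := by
      refine add_le_add (h q hqI) ?_
      rw [abs_sub_comm]; exact this.le

lemma cont_mod_of_rat_lt {f : ℝ → ℝ} (hf : ContinuousOn f (Icc 0 1)) {d M : ℝ}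
    (h : ∀ p q : ℚ, (p:ℝ) ∈ Icc (0:ℝ) 1 → (q:ℝ) ∈ Icc (0:ℝ) 1 → |(p:ℝ) - q| ≤ d → |f p - f q| ≤ M)
    {s u : ℝ} (hsI : s ∈ Icc (0:ℝ) 1) (huI : u ∈ Icc (0:ℝ) 1) (hsu : s < u) (hd : u - s ≤ d) :
    |f s - f u| ≤ M := by
  refine le_of_forall_pos_le_add fun c hc => ?_
  have hc2 : 0 < c/2 := by linarith
  have hcs := (hf s hsI); have hcu := (hf u huI)
  rw [Metric.continuousWithinAt_iff] at hcs hcu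
  obtain ⟨η₁, hη₁, hb₁⟩ := hcs (c/2) hc2
  obtain ⟨η₂, hη₂, hb₂⟩ := hcu (c/2) hc2
  obtain ⟨p, hp₁, hp₂⟩ := exists_rat_btwn (show s < min (s + η₁) u from lt_min (by linarith) hsu)
  have hpu : (p:ℝ) < u := lt_of_lt_of_le hp₂ (min_le_right _ _)
  have hpη : |(p:ℝ) - s| < η₁ := by
    rw [abs_lt]; exact ⟨by linarith, by linarith [lt_of_lt_of_le hp₂ (min_le_left _ _)]⟩
  obtain ⟨q, hq₁, hq₂⟩ := exists_rat_btwn (show max (u - η₂) p < u from max_lt (by linarith) hpu)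
  have hqp : (p:ℝ) < q := lt_of_le_of_lt (le_max_right (u-η₂) (p:ℝ)) hq₁
  have hqη : |(q:ℝ) - u| < η₂ := by
    rw [abs_lt]
    exact ⟨by linarith [lt_of_le_of_lt (le_max_left (u-η₂) (p:ℝ)) hq₁], by linarith⟩
  have hpI : (p:ℝ) ∈ Icc (0:ℝ) 1 := ⟨le_trans hsI.1 hp₁.le, le_trans hpu.le huI.2⟩
  have hqI : (q:ℝ) ∈ Icc (0:ℝ) 1 := ⟨le_trans hpI.1 hqp.le, le_trans hq₂.le huI.2⟩
  have hpq : |(p:ℝ) - q| ≤ d := by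
    rw [abs_le]; exact ⟨by linarith, by linarith⟩
  have h1 := hb₁ hpI (by rwa [Real.dist_eq]); rw [Real.dist_eq] at h1
  have h2 := hb₂ hqI (by rwa [Real.dist_eq]); rw [Real.dist_eq] at h2
  have h3 := h p q hpI hqI hpq
  calc |f s - f u| = |(f s - f p) + (f p - f q) + (f q - f u)| := by ring_nf
  _ ≤ |f s - f p| + |f p - f q| + |f q - f u| := by
      exact (abs_add_le _ _).trans (add_le_add_left (abs_add_le _ _) _)
  _ ≤ c/2 + M + c/2 := by
      refine add_le_add (add_le_add ?_ h3) h2.le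
      rw [abs_sub_comm]; exact h1.le
  _ = M + c := by ring

lemma cont_mod_of_rat {f : ℝ → ℝ} (hf : ContinuousOn f (Icc 0 1)) {d M : ℝ}
    (h : ∀ p q : ℚ, (p:ℝ) ∈ Icc (0:ℝ) 1 → (q:ℝ) ∈ Icc (0:ℝ) 1 → |(p:ℝ) - q| ≤ d → |f p - f q| ≤ M) :
    ∀ s ∈ Icc (0:ℝ) 1, ∀ u ∈ Icc (0:ℝ) 1, |s - u| ≤ d → |f s - f u| ≤ M := by
  intro s hs u hu hsu
  rcases lt_trichotomy s u with h1 | h1 | h1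
  · exact cont_mod_of_rat_lt hf h hs hu h1 (by rw [abs_le] at hsu; linarith [hsu.1])
  · have hM : (0:ℝ) ≤ M := by
      have := h 0 0 (by norm_num) (by norm_num)
        (by simpa using (abs_nonneg (s-u)).trans hsu)
      simpa using this
    simp [h1, hM]
  · rw [abs_sub_comm]
    exact cont_mod_of_rat_lt hf h hu hs h1 (by rw [abs_le] at hsu; linarith [hsu.2])


lemma grid_mono' (jn : ℕ) (t : ℕ → ℝ) (htmono : ∀ j, 1 ≤ j → j < jn → t j < t (j+1)) :
    ∀ j k, 1 ≤ j → j ≤ k → k ≤ jn → t j ≤ t k := by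
  intro j k hj hjk hk
  induction k with
  | zero => omega
  | succ k ih =>
    rcases Nat.eq_or_lt_of_le hjk with h | h
    · rw [h]
    · exact (ih (by omega) (by omega)).trans (le_of_lt (htmono k (by omega) (by omega)))

lemma exists_bracket (jn : ℕ) (t : ℕ → ℝ) {s : ℝ} :
    ∀ k, 1 ≤ k → k ≤ jn → t 1 < s → s ≤ t k →
    ∃ j, 2 ≤ j ∧ j ≤ jn ∧ t (j - 1) < s ∧ s ≤ t j := by
  intro k
  induction k with
  | zero => omega
  | succ k ih =>
    intro _ hk h1 h2
    rcases Nat.eq_zero_or_pos k with hk0 | hk0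
    · subst hk0; exact absurd h2 (not_le.mpr h1)
    by_cases hc : t k < s
    · exact ⟨k+1, by omega, hk, by simpa using hc, h2⟩
    · exact ih hk0 (by omega) h1 (not_lt.mp hc)

lemma linInterp_decomp (jn : ℕ) (t : ℕ → ℝ) (δ : ℝ)
    (hjn : 1 ≤ jn) (ht1 : 0 ≤ t 1) (htle : t jn ≤ 1)
    (hmono : ∀ j, 1 ≤ j → j < jn → t j < t (j+1))
    (hgap1 : t 1 ≤ δ) (hgapend : 1 - t jn ≤ δ)
    (hgap : ∀ j, 2 ≤ j → j ≤ jn → t j - t (j-1) ≤ δ)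
    {s : ℝ} (hs : s ∈ Icc (0:ℝ) 1) :
    ∃ u v α β : ℝ, u ∈ Icc (0:ℝ) 1 ∧ v ∈ Icc (0:ℝ) 1 ∧ |u - s| ≤ δ ∧ |v - s| ≤ δ ∧
      0 ≤ α ∧ 0 ≤ β ∧ α + β = 1 ∧
      ∀ z : ℝ → ℝ, linInterp jn t z s = α * z u + β * z v := by
  have ht1I : t 1 ∈ Icc (0:ℝ) 1 :=
    ⟨ht1, le_trans (grid_mono' jn t hmono 1 jn le_rfl hjn le_rfl) htle⟩
  have htjnI : t jn ∈ Icc (0:ℝ) 1 :=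
    ⟨le_trans ht1 (grid_mono' jn t hmono 1 jn le_rfl hjn le_rfl), htle⟩
  by_cases h1 : s ≤ t 1
  · refine ⟨t 1, t 1, 1, 0, ht1I, ht1I, ?_, ?_, by norm_num, le_rfl, by norm_num, fun z => ?_⟩
    · rw [abs_of_nonneg (by linarith)]; linarith [hs.1]
    · rw [abs_of_nonneg (by linarith)]; linarith [hs.1]
    · rw [linInterp, if_pos h1]; ring
  · by_cases h2 : ∃ j, 2 ≤ j ∧ j ≤ jn ∧ t (j - 1) < s ∧ s ≤ t j
    · obtain ⟨hj2, hjle, hjlt, hjge⟩ := Nat.find_spec h2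
      set j := Nat.find h2 with hjdef
      have hd : 0 < t j - t (j-1) := by linarith
      have huI : t (j-1) ∈ Icc (0:ℝ) 1 := by
        constructor
        · exact le_trans ht1 (grid_mono' jn t hmono 1 (j-1) le_rfl (by omega) (by omega))
        · exact le_trans (grid_mono' jn t hmono (j-1) jn (by omega) (by omega) le_rfl) htle
      have hvI : t j ∈ Icc (0:ℝ) 1 := by
        constructor
        · exact le_trans ht1 (grid_mono' jn t hmono 1 j le_rfl (by omega) hjle)
        · exact le_trans (grid_mono' jn t hmono j jn (by omega) hjle le_rfl) htle
      have hgapj : t j - t (j-1) ≤ δ := hgap j hj2 hjle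
      refine ⟨t (j-1), t j, (t j - s)/(t j - t (j-1)), (s - t (j-1))/(t j - t (j-1)),
        huI, hvI, ?_, ?_, div_nonneg (by linarith) (by linarith), div_nonneg (by linarith) (by linarith), ?_, fun z => ?_⟩
      · rw [abs_of_nonpos (by linarith)]; linarith
      · rw [abs_of_nonneg (by linarith)]; linarith
      · field_simp
        ring
      · rw [linInterp, if_neg h1, dif_pos h2]
        rw [← hjdef]
        field_simp
    · have hlt : t jn < s := by
        by_contra hcon
        push_neg at hcon
        exact h2 (exists_bracket jn t jn hjn le_rfl (not_le.mp h1) hcon)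
      refine ⟨t jn, t jn, 1, 0, htjnI, htjnI, ?_, ?_, by norm_num, le_rfl, by norm_num, fun z => ?_⟩
      · rw [abs_of_nonpos (by linarith)]; linarith [hs.2]
      · rw [abs_of_nonpos (by linarith)]; linarith [hs.2]
      · rw [linInterp, if_neg h1, dif_neg h2]; ring

set_option maxHeartbeats 4000000 in
/-- the linearly interpolated estimator of the scale function
inherits the uniform asymptotic behavior of the original estimator. -/
theorem interpolated_scale_estimator
    {Ω : Type*} [MeasurableSpace Ω] (P : Measure Ω) [IsProbabilityMeasure P]
    (jn : ℕ → ℕ) (t : ℕ → ℕ → ℝ) (δ : ℕ → ℝ)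
    (hjn : ∀ n, 1 ≤ jn n)
    (ht0 : ∀ n, t n 0 = 0) (htend : ∀ n, t n (jn n + 1) = 1)
    (htnonneg : ∀ n, 0 ≤ t n 1) (htle1 : ∀ n, t n (jn n) ≤ 1)
    (htmono : ∀ n j, 1 ≤ j → j < jn n → t n j < t n (j + 1))
    (hδ : ∀ n, δ n = (Finset.Icc 1 (jn n + 1)).sup' ⟨1, Finset.mem_Icc.mpr (by omega)⟩
      (fun j => t n j - t n (j - 1)))
    (hδ0 : Tendsto δ atTop (𝓝 0))
    (ahat : ℕ → Ω → ℝ → ℝ) (a : ℕ → ℝ → ℝ) (A : Ω → ℝ → ℝ) (lam : ℕ → ℝ)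
    (hmeas : ∀ n s, Measurable fun ω => ahat n ω s)
    (hpaths : ∀ n ω, ContinuousOn (ahat n ω) (Icc 0 1))
    (hapos : ∀ n, ∀ s ∈ Icc (0:ℝ) 1, 0 < a n s)
    (hA : ∀ ω, ContinuousOn (A ω) (Icc 0 1))
    (hlam_pos : ∀ n, 0 < lam n) (hlam_bdd : ∃ C, ∀ n, lam n ≤ C)
    -- condition (E(λₙ)): uniform convergence in probability of the standardized errors
    (hE : ∀ ε > 0, Tendsto
      (fun n => P {ω | ∃ s ∈ Icc (0:ℝ) 1, ε < |(ahat n ω s / a n s - 1) / lam n - A ω s|})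
      atTop (𝓝 0))
    -- smoothness: sup_{|s-u|≤δₙ} |a_{n,s}/a_{n,u} - 1| = o(λₙ)
    (hsmooth : ∀ ε > 0, ∀ᶠ n in atTop, ∀ s ∈ Icc (0:ℝ) 1, ∀ u ∈ Icc (0:ℝ) 1,
      |s - u| ≤ δ n → |a n s / a n u - 1| ≤ ε * lam n) :
    ∀ ε > 0, Tendsto
      (fun n => P {ω | ∃ s ∈ Icc (0:ℝ) 1,
        ε < |(linInterp (jn n) (t n) (ahat n ω) s / a n s - 1) / lam n - A ω s|})
      atTop (𝓝 0) := by
  intro ε hε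
  rw [ENNReal.tendsto_nhds_zero]
  intro θ hθ
  set θ' := min θ 1 with hθ'def
  have hθ'pos : 0 < θ' := lt_min hθ zero_lt_one
  have hθ'top : θ' ≠ ⊤ := ne_top_of_le_ne_top ENNReal.one_ne_top (min_le_right _ _)
  have h6 : (0:ENNReal) < θ' / 6 := ENNReal.div_pos hθ'pos.ne' (by norm_num)
  have h6top : θ' / 6 ≠ ⊤ := (ENNReal.div_lt_top hθ'top (by norm_num)).ne
  obtain ⟨C, hC⟩ := hlam_bdd
  set Λ := max C 1 with hΛdef
  have hΛ1 : (1:ℝ) ≤ Λ := le_max_right _ _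
  have hlamΛ : ∀ n, lam n ≤ Λ := fun n => (hC n).trans (le_max_left _ _)
  -- grid gap facts
  have hgap : ∀ n j, 1 ≤ j → j ≤ jn n + 1 → t n j - t n (j-1) ≤ δ n := by
    intro n j h1 h2
    rw [hδ n]
    exact Finset.le_sup' (fun j => t n j - t n (j-1)) (Finset.mem_Icc.mpr ⟨h1, h2⟩)
  have hδpos : ∀ n, 0 < δ n := by
    intro n
    by_contra hcon
    push_neg at hcon
    have hsum : ∑ j ∈ Finset.Icc 1 (jn n + 1), (t n j - t n (j-1)) = 1 := by
      have h1 : Finset.Icc 1 (jn n + 1) = Finset.Ico 1 (jn n + 2) := by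
        ext x; simp [Finset.mem_Icc, Finset.mem_Ico]; omega
      rw [h1, Finset.sum_Ico_eq_sum_range]
      have h2 : ∀ i : ℕ, t n (1 + i) - t n (1 + i - 1) = t n (i+1) - t n i := by
        intro i
        have e1 : 1 + i = i + 1 := by omega
        rw [e1]; simp
      calc ∑ i ∈ Finset.range (jn n + 2 - 1), (t n (1+i) - t n (1+i-1))
          = ∑ i ∈ Finset.range (jn n + 1), (t n (i+1) - t n i) := by
            apply Finset.sum_congr (by congr 1) ; intro i _; exact h2 i
        _ = t n (jn n + 1) - t n 0 := Finset.sum_range_sub (t n) (jn n + 1)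
        _ = 1 := by rw [htend n, ht0 n]; ring
    have hle : ∑ j ∈ Finset.Icc 1 (jn n + 1), (t n j - t n (j-1)) ≤ 0 :=
      Finset.sum_nonpos fun j hj => by
        have := Finset.mem_Icc.mp hj
        exact le_trans (hgap n j this.1 this.2) hcon
    rw [hsum] at hle; linarith
  -- Step 1 : boundedness of A via a fixed index m₁
  obtain ⟨m₁, hm₁⟩ := ((hE 1 zero_lt_one).eventually_lt_const h6).exists
  set Sset : ℕ → Set Ω := fun K => ⋃ (q : ℚ) (_ : (q:ℝ) ∈ Icc (0:ℝ) 1),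
      {ω | (K:ℝ) < |(ahat m₁ ω q / a m₁ q - 1) / lam m₁|} with hSdef
  have hSmeas : ∀ K, MeasurableSet (Sset K) := by
    intro K
    rw [hSdef]
    refine MeasurableSet.iUnion fun q => MeasurableSet.iUnion fun _ => ?_
    exact measurableSet_lt measurable_const
      ((((hmeas m₁ (q:ℝ)).div_const _).sub measurable_const).div_const _).abs
  have hSanti : Antitone Sset := by
    intro K K' hKK' ω hω
    rw [hSdef] at hω ⊢
    simp only [mem_iUnion, mem_setOf_eq] at hω ⊢
    obtain ⟨q, hq, hlt⟩ := hω
    exact ⟨q, hq, lt_of_le_of_lt (by exact_mod_cast hKK') hlt⟩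
  have hSsub : (⋂ K, Sset K) ⊆
      {ω | ∃ s ∈ Icc (0:ℝ) 1, 1 < |(ahat m₁ ω s / a m₁ s - 1) / lam m₁ - A ω s|} := by
    intro ω hω
    by_contra hcon
    have hbd : ∀ s ∈ Icc (0:ℝ) 1, |(ahat m₁ ω s / a m₁ s - 1) / lam m₁ - A ω s| ≤ 1 := by
      intro s hsI
      by_contra hc2
      push_neg at hc2
      exact hcon ⟨s, hsI, hc2⟩
    obtain ⟨CA, hCA⟩ := isCompact_Icc.exists_bound_of_continuousOn (hA ω)
    obtain ⟨K', hK'⟩ := exists_nat_ge (CA + 1)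
    have hmem := mem_iInter.mp hω K'
    rw [hSdef] at hmem
    simp only [mem_iUnion, mem_setOf_eq] at hmem
    obtain ⟨q, hq, hlt⟩ := hmem
    have hAq : |A ω q| ≤ CA := by
      have := hCA (q:ℝ) hq; rwa [Real.norm_eq_abs] at this
    have : |(ahat m₁ ω q / a m₁ q - 1) / lam m₁| ≤ 1 + CA := by
      calc |(ahat m₁ ω q / a m₁ q - 1) / lam m₁|
          = |((ahat m₁ ω q / a m₁ q - 1) / lam m₁ - A ω q) + A ω q| := by ring_nf
        _ ≤ |(ahat m₁ ω q / a m₁ q - 1) / lam m₁ - A ω q| + |A ω q| := abs_add_le _ _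
        _ ≤ 1 + CA := add_le_add (hbd q hq) hAq
    linarith
  have hStend := tendsto_measure_iInter_atTop (fun K => (hSmeas K).nullMeasurableSet) hSanti
    ⟨0, measure_ne_top P _⟩
  have hlim : P (⋂ K, Sset K) ≤ θ'/6 := le_trans (measure_mono hSsub) hm₁.le
  have hltadd : P (⋂ K, Sset K) < θ'/6 + θ'/6 :=
    lt_of_le_of_lt hlim (ENNReal.lt_add_right h6top h6.ne')
  obtain ⟨K, hK⟩ := (hStend.eventually_lt_const hltadd).exists
  have hPSK : P (Sset K) ≤ θ'/6 + θ'/6 := le_of_lt hK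
  -- constants
  set B₀ : ℝ := (K:ℝ) + 1 with hB₀def
  have hB₀0 : (0:ℝ) ≤ B₀ := by positivity
  have hΛB₀ : (0:ℝ) ≤ Λ * B₀ := mul_nonneg (by linarith) hB₀0
  have hden : (0:ℝ) < 2 + Λ + Λ * B₀ := by linarith
  set ε₂ : ℝ := ε/8 with hε₂def
  have hε₂pos : 0 < ε₂ := by rw [hε₂def]; linarith
  set ε₁ : ℝ := min 1 (ε/(2*(2+Λ+Λ*B₀))) with hε₁def
  have hε₁pos : 0 < ε₁ := lt_min one_pos (by positivity)
  have hε₁le1 : ε₁ ≤ 1 := min_le_left _ _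
  have hε₁le : ε₁ ≤ ε/(2*(2+Λ+Λ*B₀)) := min_le_right _ _
  set M₂ : ℝ := 1 + Λ*(B₀ + ε₂) with hM₂def
  have hM₂pos : 0 < M₂ := by
    have : (0:ℝ) ≤ Λ*(B₀ + ε₂) := mul_nonneg (by linarith) (by linarith)
    linarith
  set ε₂' : ℝ := (ε/8)/M₂ with hε₂'def
  have hε₂'pos : 0 < ε₂' := by positivity
  obtain ⟨m₂, hm₂P, hm₂sm⟩ :=
    (((hE ε₂ hε₂pos).eventually_lt_const h6).and (hsmooth ε₂' hε₂'pos)).exists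
  have hlm2 : 0 < lam m₂ := hlam_pos m₂
  obtain ⟨α₀, hα₀pos, hα₀⟩ := chain_lower (hapos m₂)
    (le_of_lt (mul_pos hε₂'pos hlm2)) (hδpos m₂) hm₂sm
  set c'' : ℝ := α₀ * lam m₂ * (ε/8) with hc''def
  have hc''pos : 0 < c'' := by positivity
  -- modulus-of-continuity sets for ahat m₂
  set Tset : ℕ → Set Ω := fun j => ⋃ (p : ℚ) (q : ℚ) (_ : (p:ℝ) ∈ Icc (0:ℝ) 1)
      (_ : (q:ℝ) ∈ Icc (0:ℝ) 1) (_ : |(p:ℝ) - (q:ℝ)| ≤ 1/((j:ℝ)+1)),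
      {ω | c'' ≤ |ahat m₂ ω p - ahat m₂ ω q|} with hTdef
  have hTmeas : ∀ j, MeasurableSet (Tset j) := by
    intro j
    rw [hTdef]
    refine MeasurableSet.iUnion fun p => MeasurableSet.iUnion fun q =>
      MeasurableSet.iUnion fun _ => MeasurableSet.iUnion fun _ =>
      MeasurableSet.iUnion fun _ => ?_
    exact measurableSet_le measurable_const ((hmeas m₂ (p:ℝ)).sub (hmeas m₂ (q:ℝ))).abs
  have hTanti : Antitone Tset := by
    intro j j' hjj' ω hω
    rw [hTdef] at hω ⊢
    simp only [mem_iUnion, mem_setOf_eq] at hω ⊢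
    obtain ⟨p, q, hp, hq, hpq, hge⟩ := hω
    refine ⟨p, q, hp, hq, le_trans hpq ?_, hge⟩
    apply one_div_le_one_div_of_le (by positivity)
    have : (j:ℝ) ≤ (j':ℝ) := by exact_mod_cast hjj'
    linarith
  have hTempty : (⋂ j, Tset j) = ∅ := by
    rw [Set.eq_empty_iff_forall_notMem]
    intro ω hω
    have huc := isCompact_Icc.uniformContinuousOn_of_continuous (hpaths m₂ ω)
    rw [Metric.uniformContinuousOn_iff] at huc
    obtain ⟨η, hη, hb⟩ := huc c'' hc''pos
    obtain ⟨j0, hj0⟩ := exists_nat_one_div_lt hη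
    have hmem := mem_iInter.mp hω j0
    rw [hTdef] at hmem
    simp only [mem_iUnion, mem_setOf_eq] at hmem
    obtain ⟨p, q, hp, hq, hpq, hge⟩ := hmem
    have := hb (p:ℝ) hp (q:ℝ) hq (by rw [Real.dist_eq]; exact lt_of_le_of_lt hpq hj0)
    rw [Real.dist_eq] at this
    linarith
  have hTtend := tendsto_measure_iInter_atTop (fun j => (hTmeas j).nullMeasurableSet) hTanti
    ⟨0, measure_ne_top P _⟩
  rw [hTempty, measure_empty] at hTtend
  obtain ⟨jT, hjT⟩ := (hTtend.eventually_lt_const h6).exists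
  have hPTjT : P (Tset jT) ≤ θ'/6 := le_of_lt hjT
  -- the eventual estimates
  have hmin : (0:ℝ) < min (δ m₂) (1/((jT:ℝ)+1)) := lt_min (hδpos m₂) (by positivity)
  filter_upwards [(hE ε₁ hε₁pos).eventually_lt_const h6, hsmooth ε₁ hε₁pos,
    hδ0.eventually_lt_const hmin] with n hn1 hn2 hn3
  have hδm₂ : δ n ≤ δ m₂ := (hn3.trans_le (min_le_left _ _)).le
  have hδjT : δ n ≤ 1/((jT:ℝ)+1) := (hn3.trans_le (min_le_right _ _)).le
  have hlmn : 0 < lam n := hlam_pos n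
  -- the inclusion of the bad event
  have hsub : {ω | ∃ s ∈ Icc (0:ℝ) 1,
        ε < |(linInterp (jn n) (t n) (ahat n ω) s / a n s - 1) / lam n - A ω s|} ⊆
      {ω | ∃ s ∈ Icc (0:ℝ) 1, ε₁ < |(ahat n ω s / a n s - 1) / lam n - A ω s|} ∪
      ({ω | ∃ s ∈ Icc (0:ℝ) 1, 1 < |(ahat m₁ ω s / a m₁ s - 1) / lam m₁ - A ω s|} ∪
      (Sset K ∪
      ({ω | ∃ s ∈ Icc (0:ℝ) 1, ε₂ < |(ahat m₂ ω s / a m₂ s - 1) / lam m₂ - A ω s|} ∪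
      Tset jT))) := by
    intro ω hω
    by_contra hnot
    simp only [Set.mem_union, not_or] at hnot
    obtain ⟨hn1', hn2', hn3', hn4', hn5'⟩ := hnot
    obtain ⟨s, hsI, hslt⟩ := hω
    -- extract pointwise facts
    have f1 : ∀ w ∈ Icc (0:ℝ) 1, |(ahat n ω w / a n w - 1) / lam n - A ω w| ≤ ε₁ := by
      intro w hw; by_contra hc; push_neg at hc; exact hn1' ⟨w, hw, hc⟩
    have f2 : ∀ w ∈ Icc (0:ℝ) 1, |(ahat m₁ ω w / a m₁ w - 1) / lam m₁ - A ω w| ≤ 1 := by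
      intro w hw; by_contra hc; push_neg at hc; exact hn2' ⟨w, hw, hc⟩
    have f3 : ∀ q : ℚ, (q:ℝ) ∈ Icc (0:ℝ) 1 →
        |(ahat m₁ ω q / a m₁ q - 1) / lam m₁| ≤ (K:ℝ) := by
      intro q hq; by_contra hc; push_neg at hc
      refine hn3' ?_
      rw [hSdef]
      simp only [mem_iUnion, mem_setOf_eq]
      exact ⟨q, hq, hc⟩
    have f4 : ∀ w ∈ Icc (0:ℝ) 1, |(ahat m₂ ω w / a m₂ w - 1) / lam m₂ - A ω w| ≤ ε₂ := by
      intro w hw; by_contra hc; push_neg at hc; exact hn4' ⟨w, hw, hc⟩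
    have f5 : ∀ p q : ℚ, (p:ℝ) ∈ Icc (0:ℝ) 1 → (q:ℝ) ∈ Icc (0:ℝ) 1 →
        |(p:ℝ) - (q:ℝ)| ≤ 1/((jT:ℝ)+1) → |ahat m₂ ω p - ahat m₂ ω q| ≤ c'' := by
      intro p q hp hq hpq
      by_contra hc; push_neg at hc
      refine hn5' ?_
      rw [hTdef]
      simp only [mem_iUnion, mem_setOf_eq]
      exact ⟨p, q, hp, hq, hpq, le_of_lt hc⟩
    -- |A| ≤ B₀
    have g1 : ∀ q : ℚ, (q:ℝ) ∈ Icc (0:ℝ) 1 → |A ω q| ≤ B₀ := by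
      intro q hq
      have h1 := f2 (q:ℝ) hq
      have h2 := f3 q hq
      calc |A ω q| = |((ahat m₁ ω q / a m₁ q - 1) / lam m₁)
            - ((ahat m₁ ω q / a m₁ q - 1) / lam m₁ - A ω q)| := by ring_nf
        _ ≤ |(ahat m₁ ω q / a m₁ q - 1) / lam m₁|
            + |(ahat m₁ ω q / a m₁ q - 1) / lam m₁ - A ω q| := abs_sub _ _
        _ ≤ (K:ℝ) + 1 := add_le_add h2 h1
        _ = B₀ := hB₀def.symm
    have g2 : ∀ w ∈ Icc (0:ℝ) 1, |A ω w| ≤ B₀ := cont_bound_of_rat (hA ω) g1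
    -- rational modulus of A
    have g3 : ∀ p q : ℚ, (p:ℝ) ∈ Icc (0:ℝ) 1 → (q:ℝ) ∈ Icc (0:ℝ) 1 →
        |(p:ℝ) - (q:ℝ)| ≤ δ n → |A ω p - A ω q| ≤ ε/2 := by
      intro p q hpI hqI hpq
      have hap : 0 < a m₂ p := hapos m₂ (p:ℝ) hpI
      have haq : 0 < a m₂ q := hapos m₂ (q:ℝ) hqI
      have hα₀p := hα₀ (p:ℝ) hpI
      have h5 : |ahat m₂ ω p - ahat m₂ ω q| ≤ c'' := f5 p q hpI hqI (hpq.trans hδjT)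
      have hr : |a m₂ q / a m₂ p - 1| ≤ ε₂' * lam m₂ :=
        hm₂sm (q:ℝ) hqI (p:ℝ) hpI (by rw [abs_sub_comm]; exact hpq.trans hδm₂)
      have hXq : |ahat m₂ ω q / a m₂ q| ≤ M₂ := by
        have h7 := f4 (q:ℝ) hqI
        have h8 := g2 (q:ℝ) hqI
        have h10 : |(ahat m₂ ω q / a m₂ q - 1) / lam m₂| ≤ ε₂ + B₀ := by
          calc |(ahat m₂ ω q / a m₂ q - 1) / lam m₂|
              = |((ahat m₂ ω q / a m₂ q - 1) / lam m₂ - A ω q) + A ω q| := by ring_nf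
            _ ≤ |(ahat m₂ ω q / a m₂ q - 1) / lam m₂ - A ω q| + |A ω q| := abs_add_le _ _
            _ ≤ ε₂ + B₀ := add_le_add h7 h8
        have h9 : |ahat m₂ ω q / a m₂ q - 1| ≤ lam m₂ * (ε₂ + B₀) := by
          have heq : |ahat m₂ ω q / a m₂ q - 1|
              = lam m₂ * |(ahat m₂ ω q / a m₂ q - 1) / lam m₂| := by
            rw [abs_div, abs_of_pos hlm2]; field_simp
          rw [heq]
          exact mul_le_mul_of_nonneg_left h10 (le_of_lt hlm2)
        calc |ahat m₂ ω q / a m₂ q|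
            = |1 + (ahat m₂ ω q / a m₂ q - 1)| := by ring_nf
          _ ≤ |(1:ℝ)| + |ahat m₂ ω q / a m₂ q - 1| := abs_add_le _ _
          _ ≤ 1 + lam m₂ * (ε₂ + B₀) := by rw [abs_one]; linarith
          _ ≤ M₂ := by
              rw [hM₂def]
              have hbε : (0:ℝ) ≤ B₀ + ε₂ := by linarith
              nlinarith [hlamΛ m₂, hlm2]
      have hid : (ahat m₂ ω p / a m₂ p - 1) / lam m₂ - (ahat m₂ ω q / a m₂ q - 1) / lam m₂
          = (ahat m₂ ω p - ahat m₂ ω q) / (a m₂ p * lam m₂)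
            + (ahat m₂ ω q / a m₂ q) * ((a m₂ q / a m₂ p - 1) / lam m₂) := by
        field_simp
        ring
      have hb1 : |(ahat m₂ ω p - ahat m₂ ω q) / (a m₂ p * lam m₂)| ≤ ε/8 := by
        rw [abs_div, abs_of_pos (mul_pos hap hlm2), div_le_iff₀ (mul_pos hap hlm2)]
        calc |ahat m₂ ω p - ahat m₂ ω q| ≤ c'' := h5
          _ = α₀ * lam m₂ * (ε/8) := hc''def
          _ ≤ ε/8 * (a m₂ p * lam m₂) := by nlinarith [hα₀p, hlm2, hε]
      have hb2 : |(ahat m₂ ω q / a m₂ q) * ((a m₂ q / a m₂ p - 1) / lam m₂)| ≤ ε/8 := by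
        rw [abs_mul]
        have habs : |(a m₂ q / a m₂ p - 1) / lam m₂| = |a m₂ q / a m₂ p - 1| / lam m₂ := by
          rw [abs_div, abs_of_pos hlm2]
        rw [habs]
        have hd2 : |a m₂ q / a m₂ p - 1| / lam m₂ ≤ ε₂' := by
          rw [div_le_iff₀ hlm2]; exact hr
        calc |ahat m₂ ω q / a m₂ q| * (|a m₂ q / a m₂ p - 1| / lam m₂)
            ≤ M₂ * ε₂' := mul_le_mul hXq hd2 (by positivity) (le_of_lt hM₂pos)
          _ = ε/8 := by rw [hε₂'def]; field_simp
      have hXpq : |(ahat m₂ ω p / a m₂ p - 1) / lam m₂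
          - (ahat m₂ ω q / a m₂ q - 1) / lam m₂| ≤ ε/8 + ε/8 := by
        rw [hid]
        exact (abs_add_le _ _).trans (add_le_add hb1 hb2)
      have h11 := f4 (p:ℝ) hpI
      have h12 := f4 (q:ℝ) hqI
      calc |A ω p - A ω q|
          = |(A ω p - (ahat m₂ ω p / a m₂ p - 1) / lam m₂)
            + ((ahat m₂ ω p / a m₂ p - 1) / lam m₂ - (ahat m₂ ω q / a m₂ q - 1) / lam m₂)
            + ((ahat m₂ ω q / a m₂ q - 1) / lam m₂ - A ω q)| := by ring_nf
        _ ≤ |A ω p - (ahat m₂ ω p / a m₂ p - 1) / lam m₂|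
            + |(ahat m₂ ω p / a m₂ p - 1) / lam m₂ - (ahat m₂ ω q / a m₂ q - 1) / lam m₂|
            + |(ahat m₂ ω q / a m₂ q - 1) / lam m₂ - A ω q| :=
            (abs_add_le _ _).trans (add_le_add_left (abs_add_le _ _) _)
        _ ≤ ε₂ + (ε/8 + ε/8) + ε₂ := by
            refine add_le_add (add_le_add ?_ hXpq) h12
            rw [abs_sub_comm]; exact h11
        _ = ε/2 := by rw [hε₂def]; ring
    have g4 : ∀ w ∈ Icc (0:ℝ) 1, ∀ u ∈ Icc (0:ℝ) 1, |w - u| ≤ δ n →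
        |A ω w - A ω u| ≤ ε/2 := cont_mod_of_rat (hA ω) g3
    -- per grid-point estimate
    have key : ∀ w ∈ Icc (0:ℝ) 1, |w - s| ≤ δ n →
        |(ahat n ω w / a n s - 1) / lam n - A ω s| ≤ ε := by
      intro w hwI hws
      have haw : 0 < a n w := hapos n w hwI
      have has : 0 < a n s := hapos n s hsI
      have hρ : |a n w / a n s - 1| ≤ ε₁ * lam n := hn2 w hwI s hsI hws
      have hx := f1 w hwI
      have hAw := g2 w hwI
      have hmod := g4 w hwI s hsI hws
      have hid2 : (ahat n ω w / a n s - 1) / lam n - A ω s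
          = (a n w / a n s - 1) / lam n
            + (a n w / a n s) * ((ahat n ω w / a n w - 1) / lam n - A ω w)
            + (a n w / a n s - 1) * A ω w + (A ω w - A ω s) := by
        field_simp
        ring
      have t1 : |(a n w / a n s - 1) / lam n| ≤ ε₁ := by
        rw [abs_div, abs_of_pos hlmn, div_le_iff₀ hlmn]
        exact hρ
      have tρ : |a n w / a n s| ≤ 1 + Λ := by
        calc |a n w / a n s| = |1 + (a n w / a n s - 1)| := by ring_nf
          _ ≤ |(1:ℝ)| + |a n w / a n s - 1| := abs_add_le _ _
          _ ≤ 1 + ε₁ * lam n := by rw [abs_one]; linarith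
          _ ≤ 1 + Λ := by nlinarith [hlamΛ n, hlmn, hε₁le1, hε₁pos]
      have t2 : |(a n w / a n s) * ((ahat n ω w / a n w - 1) / lam n - A ω w)|
          ≤ (1 + Λ) * ε₁ := by
        rw [abs_mul]
        exact mul_le_mul tρ hx (abs_nonneg _) (by linarith)
      have t3 : |(a n w / a n s - 1) * A ω w| ≤ ε₁ * Λ * B₀ := by
        rw [abs_mul]
        have hstep : ε₁ * lam n ≤ ε₁ * Λ := mul_le_mul_of_nonneg_left (hlamΛ n) hε₁pos.le
        calc |a n w / a n s - 1| * |A ω w| ≤ (ε₁ * lam n) * B₀ :=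
            mul_le_mul hρ hAw (abs_nonneg _) (by positivity)
          _ ≤ ε₁ * Λ * B₀ := mul_le_mul_of_nonneg_right hstep hB₀0
      have hsum1 : ε₁ * (2 + Λ + Λ * B₀) ≤ ε/2 := by
        have h := mul_le_mul_of_nonneg_right hε₁le (le_of_lt hden)
        calc ε₁ * (2 + Λ + Λ * B₀) ≤ ε/(2*(2+Λ+Λ*B₀)) * (2 + Λ + Λ * B₀) := h
          _ = ε/2 := by field_simp
      calc |(ahat n ω w / a n s - 1) / lam n - A ω s|
          = |(a n w / a n s - 1) / lam n
            + (a n w / a n s) * ((ahat n ω w / a n w - 1) / lam n - A ω w)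
            + (a n w / a n s - 1) * A ω w + (A ω w - A ω s)| := by rw [hid2]
        _ ≤ |(a n w / a n s - 1) / lam n
            + (a n w / a n s) * ((ahat n ω w / a n w - 1) / lam n - A ω w)
            + (a n w / a n s - 1) * A ω w| + |A ω w - A ω s| := abs_add_le _ _
        _ ≤ (|(a n w / a n s - 1) / lam n
            + (a n w / a n s) * ((ahat n ω w / a n w - 1) / lam n - A ω w)|
            + |(a n w / a n s - 1) * A ω w|) + |A ω w - A ω s| := by
            gcongr
            exact abs_add_le _ _
        _ ≤ ((|(a n w / a n s - 1) / lam n|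
            + |(a n w / a n s) * ((ahat n ω w / a n w - 1) / lam n - A ω w)|)
            + |(a n w / a n s - 1) * A ω w|) + |A ω w - A ω s| := by
            gcongr
            exact abs_add_le _ _
        _ ≤ ((ε₁ + (1 + Λ) * ε₁) + ε₁ * Λ * B₀) + ε/2 := by
            gcongr <;> first | exact t1 | exact t2 | exact t3 | exact hmod
        _ = ε₁ * (2 + Λ + Λ * B₀) + ε/2 := by ring
        _ ≤ ε/2 + ε/2 := by linarith [hsum1]
        _ = ε := by ring
    -- interpolation decomposition
    have hgap1 : t n 1 ≤ δ n := by
      have := hgap n 1 le_rfl (by omega)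
      simpa [ht0 n] using this
    have hgapend : 1 - t n (jn n) ≤ δ n := by
      have := hgap n (jn n + 1) (by omega) le_rfl
      simpa [htend n] using this
    obtain ⟨u, v, αw, βw, huI, hvI, hus, hvs, hαw, hβw, hαβ, hval⟩ :=
      linInterp_decomp (jn n) (t n) (δ n) (hjn n) (htnonneg n) (htle1 n) (htmono n)
        hgap1 hgapend (fun j h2 hle => hgap n j (by omega) (by omega)) hsI
    rw [hval (ahat n ω)] at hslt
    have hβw' : βw = 1 - αw := by linarith
    subst hβw'
    have has : 0 < a n s := hapos n s hsI
    have hsplit : ((αw * ahat n ω u + (1 - αw) * ahat n ω v) / a n s - 1) / lam n - A ω s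
        = αw * ((ahat n ω u / a n s - 1) / lam n - A ω s)
          + (1 - αw) * ((ahat n ω v / a n s - 1) / lam n - A ω s) := by
      field_simp
      ring
    have hDu := key u huI hus
    have hDv := key v hvI hvs
    have : |((αw * ahat n ω u + (1 - αw) * ahat n ω v) / a n s - 1) / lam n - A ω s| ≤ ε := by
      rw [hsplit]
      calc |αw * ((ahat n ω u / a n s - 1) / lam n - A ω s)
          + (1 - αw) * ((ahat n ω v / a n s - 1) / lam n - A ω s)|
          ≤ |αw * ((ahat n ω u / a n s - 1) / lam n - A ω s)|
            + |(1 - αw) * ((ahat n ω v / a n s - 1) / lam n - A ω s)| := abs_add_le _ _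
        _ = αw * |(ahat n ω u / a n s - 1) / lam n - A ω s|
            + (1 - αw) * |(ahat n ω v / a n s - 1) / lam n - A ω s| := by
            rw [abs_mul, abs_mul, abs_of_nonneg hαw, abs_of_nonneg hβw]
        _ ≤ αw * ε + (1 - αw) * ε := by
            exact add_le_add (mul_le_mul_of_nonneg_left hDu hαw)
              (mul_le_mul_of_nonneg_left hDv hβw)
        _ = ε := by ring
    linarith
  -- finish: measure bound
  calc P {ω | ∃ s ∈ Icc (0:ℝ) 1,
        ε < |(linInterp (jn n) (t n) (ahat n ω) s / a n s - 1) / lam n - A ω s|}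
      ≤ P ({ω | ∃ s ∈ Icc (0:ℝ) 1, ε₁ < |(ahat n ω s / a n s - 1) / lam n - A ω s|} ∪
      ({ω | ∃ s ∈ Icc (0:ℝ) 1, 1 < |(ahat m₁ ω s / a m₁ s - 1) / lam m₁ - A ω s|} ∪
      (Sset K ∪
      ({ω | ∃ s ∈ Icc (0:ℝ) 1, ε₂ < |(ahat m₂ ω s / a m₂ s - 1) / lam m₂ - A ω s|} ∪
      Tset jT)))) := measure_mono hsub
    _ ≤ P {ω | ∃ s ∈ Icc (0:ℝ) 1, ε₁ < |(ahat n ω s / a n s - 1) / lam n - A ω s|} +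
      (P {ω | ∃ s ∈ Icc (0:ℝ) 1, 1 < |(ahat m₁ ω s / a m₁ s - 1) / lam m₁ - A ω s|} +
      (P (Sset K) +
      (P {ω | ∃ s ∈ Icc (0:ℝ) 1, ε₂ < |(ahat m₂ ω s / a m₂ s - 1) / lam m₂ - A ω s|} +
      P (Tset jT)))) := by
        refine (measure_union_le _ _).trans ?_
        gcongr
        refine (measure_union_le _ _).trans ?_
        gcongr
        refine (measure_union_le _ _).trans ?_
        gcongr
        exact measure_union_le _ _
    _ ≤ θ'/6 + (θ'/6 + ((θ'/6 + θ'/6) + (θ'/6 + θ'/6))) := by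
        gcongr <;>
          first | exact hn1.le | exact hm₁.le | exact hPSK | exact hm₂P.le | exact hPTjT
    _ = 6 * (θ'/6) := by ring
    _ = θ' := ENNReal.mul_div_cancel' (by norm_num) (by norm_num)
    _ ≤ θ := min_le_left _ _
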